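/- Suppose m̂ is a P(F̂)-invariant probability on M̂ × P(ℝ²) whose disintegration over the two-sided Markov measure μ̂ has conditional measures m̂_x̂ depending only on the negative coordinates of x̂. Then its projection m to M × P(ℝ²) (M the one-sided shift space) is a skew-product measure: there exists a measure vector η = (η_i)_{i∈X} with m = Σ_{i∈X} (μ | [0;i]) × η_i. -/

import Mathlib

open MeasureTheory
open scoped LinearAlgebra.Projectivization BigOperators ENNReal NNReal

noncomputable section

namespace PaperNS

/-- Real projective space `P(ℝ^d)`. -/
abbrev Pd (d : ℕ) := ℙ ℝ (Fin d → ℝ)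

instance (d : ℕ) : TopologicalSpace (Pd d) :=
  TopologicalSpace.coinduced (Projectivization.mk' ℝ) inferInstance

instance (d : ℕ) : MeasurableSpace (Pd d) := borel _
instance (d : ℕ) : BorelSpace (Pd d) := ⟨rfl⟩

/-- Projective action of an invertible linear map on `P(ℝ^d)`. -/
def act (d : ℕ) (g : (Fin d → ℝ) ≃ₗ[ℝ] (Fin d → ℝ)) : Pd d → Pd d :=
  Projectivization.map (g : (Fin d → ℝ) →ₗ[ℝ] (Fin d → ℝ)) g.injective

/-! ### Auxiliary material -/

/-- Restriction of a two-sided sequence to its negative coordinates. -/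
def negRestrict (q : ℕ) : (ℤ → Fin q) → ({n : ℤ // n < 0} → Fin q) := fun x n => x n.1

lemma measurable_negRestrict (q : ℕ) : Measurable (negRestrict q) :=
  measurable_pi_lambda _ fun n => measurable_pi_apply _

lemma measurableSet_coord {δ : Type*} {α : δ → Type*} [∀ i, MeasurableSpace (α i)]
    (k : δ) (a : α k) [MeasurableSingletonClass (α k)] :
    MeasurableSet {x : ∀ i, α i | x k = a} := by
  have : {x : ∀ i, α i | x k = a} = (fun x : ∀ i, α i => x k) ⁻¹' {a} := rfl
  rw [this]
  exact (measurable_pi_apply k) (measurableSet_singleton a)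

/-- The sub-σ-algebra of events depending only on negative coordinates. -/
def Gneg (q : ℕ) : MeasurableSpace (ℤ → Fin q) :=
  MeasurableSpace.comap (negRestrict q) inferInstance

lemma Gneg_le (q : ℕ) : Gneg q ≤ (inferInstance : MeasurableSpace (ℤ → Fin q)) :=
  (measurable_negRestrict q).comap_le

lemma negdep_of_Gneg {q : ℕ} {S : Set (ℤ → Fin q)} (hS : MeasurableSet[Gneg q] S) :
    ∀ x y : ℤ → Fin q, (∀ n : ℤ, n < 0 → x n = y n) → (x ∈ S ↔ y ∈ S) := by
  obtain ⟨B, -, rfl⟩ := hS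
  intro x y hxy
  have : negRestrict q x = negRestrict q y := funext fun n => hxy n.1 n.2
  simp only [Set.mem_preimage, this]

/-- A `Gneg`-measurable exact density for a measure defined by a (possibly non-measurable)
fiberwise-constant integrand. -/
lemma exists_adapted_density {q : ℕ} (μhat : Measure (ℤ → Fin q)) [IsProbabilityMeasure μhat]
    (lam : Measure (ℤ → Fin q)) (g : (ℤ → Fin q) → ℝ≥0∞)
    (hg1 : ∀ x, g x ≤ 1)
    (hgneg : ∀ x y : ℤ → Fin q, (∀ n : ℤ, n < 0 → x n = y n) → g x = g y)
    (hlam : ∀ C : Set (ℤ → Fin q), MeasurableSet C → lam C = ∫⁻ x in C, g x ∂μhat) :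
    ∃ h : (ℤ → Fin q) → ℝ≥0∞, Measurable[Gneg q] h ∧
      ∀ C : Set (ℤ → Fin q), MeasurableSet C → lam C = ∫⁻ x in C, h x ∂μhat := by
  have hle : Gneg q ≤ (inferInstance : MeasurableSpace (ℤ → Fin q)) := Gneg_le q
  haveI : IsFiniteMeasure (μhat.trim hle) :=
    ⟨by rw [trim_measurableSet_eq hle MeasurableSet.univ]; exact measure_lt_top _ _⟩
  -- a measurable minorant of `g` with the same total integral
  obtain ⟨h₁, h₁m, h₁le, h₁eq⟩ := exists_measurable_le_lintegral_eq μhat g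
  have h₁le1 : ∀ x, h₁ x ≤ 1 := fun x => (h₁le x).trans (hg1 x)
  set f₁ : (ℤ → Fin q) → ℝ := fun x => (h₁ x).toReal with hf₁def
  have hf₁m : Measurable f₁ := h₁m.ennreal_toReal
  have hf₁int : Integrable f₁ μhat := by
    refine (integrable_const (1 : ℝ)).mono' hf₁m.aestronglyMeasurable (ae_of_all _ fun x => ?_)
    rw [Real.norm_eq_abs, abs_of_nonneg ENNReal.toReal_nonneg]
    calc (h₁ x).toReal ≤ (1 : ℝ≥0∞).toReal := ENNReal.toReal_mono ENNReal.one_ne_top (h₁le1 x)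
      _ = 1 := ENNReal.toReal_one
  -- the conditional expectation kernel for `Gneg`
  set K := ProbabilityTheory.condExpKernel μhat (Gneg q) with hKdef
  -- the fiber of `x` (same negative coordinates)
  set Fib : (ℤ → Fin q) → Set (ℤ → Fin q) :=
    fun x => ⋂ n : {n : ℤ // n < 0}, {y : ℤ → Fin q | y n.1 = x n.1} with hFibdef
  have hFib_meas : ∀ x, MeasurableSet (Fib x) := fun x =>
    MeasurableSet.iInter fun n => measurableSet_coord (α := fun _ : ℤ => Fin q) n.1 (x n.1)
  have hfiber : ∀ᵐ x ∂μhat, (K x) (Fib x) = 1 := by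
    have hpair : ∀ (n : {n : ℤ // n < 0}) (a : Fin q),
        ∀ᵐ x ∂μhat, x n.1 = a → (K x) {y : ℤ → Fin q | y n.1 = a} = 1 := by
      intro n a
      have hsG : MeasurableSet[Gneg q] {y : ℤ → Fin q | y n.1 = a} :=
        MeasurableSpace.measurableSet_comap.mpr
          ⟨{u | u n = a}, measurableSet_coord (α := fun _ : {n : ℤ // n < 0} => Fin q) n a, rfl⟩
      have hs : MeasurableSet {y : ℤ → Fin q | y n.1 = a} := hle _ hsG
      have h1 := ProbabilityTheory.condExpKernel_ae_eq_condExp (μ := μhat) hle hs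
      have h2 : μhat[Set.indicator {y : ℤ → Fin q | y n.1 = a} (fun _ => (1 : ℝ)) | Gneg q]
          = Set.indicator {y : ℤ → Fin q | y n.1 = a} (fun _ => (1 : ℝ)) :=
        condExp_of_stronglyMeasurable hle
          (stronglyMeasurable_const.indicator hsG) ((integrable_const (1 : ℝ)).indicator hs)
      filter_upwards [h1] with x hx hxa
      rw [h2] at hx
      have hmem : x ∈ {y : ℤ → Fin q | y n.1 = a} := hxa
      rw [Set.indicator_of_mem hmem] at hx
      rw [measureReal_def] at hx
      exact (ENNReal.toReal_eq_one_iff _).mp hx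
    have hall := ae_all_iff.mpr fun n : {n : ℤ // n < 0} =>
      ae_all_iff.mpr fun a : Fin q => hpair n a
    filter_upwards [hall] with x hx
    haveI : IsProbabilityMeasure (K x) := inferInstance
    have hcompl : (K x) (Fib x)ᶜ = 0 := by
      rw [hFibdef, Set.compl_iInter]
      refine measure_iUnion_null fun n => ?_
      have h1 := hx n (x n.1) rfl
      have hs : MeasurableSet {y : ℤ → Fin q | y n.1 = x n.1} :=
        measurableSet_coord (α := fun _ : ℤ => Fin q) n.1 (x n.1)
      rw [measure_compl hs (measure_ne_top _ _), h1, measure_univ, tsub_self]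
    have htot := measure_add_measure_compl (μ := K x) (hFib_meas x)
    rw [hcompl, add_zero, measure_univ] at htot
    exact htot
  -- the conditional expectation is bounded by `g`
  have hcond := ProbabilityTheory.condExp_ae_eq_integral_condExpKernel hle hf₁int
  have hbound : (μhat[f₁ | Gneg q]) ≤ᵐ[μhat] fun x => (g x).toReal := by
    filter_upwards [hcond, hfiber] with x hx hfib
    rw [hx]
    haveI : IsProbabilityMeasure (K x) := inferInstance
    have hmemae : ∀ᵐ y ∂(K x), y ∈ Fib x := by
      rw [ae_iff]
      have : {y | ¬ y ∈ Fib x} = (Fib x)ᶜ := rfl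
      rw [this, measure_compl (hFib_meas x) (measure_ne_top _ _), hfib, measure_univ, tsub_self]
    have hKae : ∀ᵐ y ∂(K x), f₁ y ≤ (g x).toReal := by
      filter_upwards [hmemae] with y hy
      have hyx : ∀ n : ℤ, n < 0 → y n = x n := fun n hn =>
        Set.mem_iInter.mp hy ⟨n, hn⟩
      have hgy : g y = g x := hgneg y x hyx
      calc f₁ y = (h₁ y).toReal := rfl
        _ ≤ (g y).toReal :=
            ENNReal.toReal_mono (lt_of_le_of_lt (hg1 y) ENNReal.one_lt_top).ne (h₁le y)
        _ = (g x).toReal := by rw [hgy]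
    have hint1 : Integrable f₁ (K x) := by
      refine (integrable_const (1 : ℝ)).mono' hf₁m.aestronglyMeasurable (ae_of_all _ fun z => ?_)
      rw [Real.norm_eq_abs, abs_of_nonneg ENNReal.toReal_nonneg]
      calc (h₁ z).toReal ≤ (1 : ℝ≥0∞).toReal := ENNReal.toReal_mono ENNReal.one_ne_top (h₁le1 z)
        _ = 1 := ENNReal.toReal_one
    calc ∫ y, f₁ y ∂(K x) ≤ ∫ _, (g x).toReal ∂(K x) :=
          integral_mono_ae hint1 (integrable_const _) hKae
      _ = (g x).toReal := by simp
  have h₂G : Measurable[Gneg q] (fun x => ENNReal.ofReal ((μhat[f₁ | Gneg q]) x)) :=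
    stronglyMeasurable_condExp.measurable.ennreal_ofReal
  set h₂ : (ℤ → Fin q) → ℝ≥0∞ := fun x => ENNReal.ofReal ((μhat[f₁ | Gneg q]) x) with hh₂def
  have h₂m : Measurable h₂ := h₂G.mono hle le_rfl
  have h₂g : h₂ ≤ᵐ[μhat] g := by
    filter_upwards [hbound] with x hx
    calc h₂ x ≤ ENNReal.ofReal ((g x).toReal) := ENNReal.ofReal_le_ofReal hx
      _ = g x := ENNReal.ofReal_toReal (lt_of_le_of_lt (hg1 x) ENNReal.one_lt_top).ne
  have hint_h₁_ne : ∫⁻ x, h₁ x ∂μhat ≠ ⊤ := by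
    refine (lt_of_le_of_lt (lintegral_mono h₁le1) ?_).ne
    rw [lintegral_one, measure_univ]
    exact ENNReal.one_lt_top
  have h₂tot : ∫⁻ x, h₂ x ∂μhat = lam Set.univ := by
    have h0 : 0 ≤ᵐ[μhat] μhat[f₁ | Gneg q] :=
      condExp_nonneg (ae_of_all _ fun x => ENNReal.toReal_nonneg)
    have hstep : ∫ x, f₁ x ∂μhat = (∫⁻ x, h₁ x ∂μhat).toReal :=
      integral_toReal h₁m.aemeasurable
        (ae_of_all _ fun x => lt_of_le_of_lt (h₁le1 x) ENNReal.one_lt_top)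
    rw [hh₂def, ← ofReal_integral_eq_lintegral_ofReal integrable_condExp h0,
      integral_condExp hle, hstep, ENNReal.ofReal_toReal hint_h₁_ne, ← h₁eq,
      hlam _ MeasurableSet.univ, Measure.restrict_univ]
  haveI hfin : IsFiniteMeasure lam := by
    constructor
    rw [hlam _ MeasurableSet.univ, Measure.restrict_univ]
    refine lt_of_le_of_lt (lintegral_mono hg1) ?_
    rw [lintegral_one, measure_univ]
    exact ENNReal.one_lt_top
  refine ⟨h₂, h₂G, fun C hC => ?_⟩
  have hA : ∫⁻ x in C, h₂ x ∂μhat ≤ lam C := by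
    rw [hlam C hC]; exact lintegral_mono_ae (ae_restrict_of_ae h₂g)
  have hB : ∫⁻ x in Cᶜ, h₂ x ∂μhat ≤ lam Cᶜ := by
    rw [hlam _ hC.compl]; exact lintegral_mono_ae (ae_restrict_of_ae h₂g)
  have hsum : ∫⁻ x in C, h₂ x ∂μhat + ∫⁻ x in Cᶜ, h₂ x ∂μhat = lam C + lam Cᶜ := by
    rw [lintegral_add_compl _ hC, h₂tot, measure_add_measure_compl hC]
  have h1 : lam C + lam Cᶜ ≤ ∫⁻ x in C, h₂ x ∂μhat + lam Cᶜ := by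
    rw [← hsum]; exact add_le_add_right hB _
  have h2 : lam C ≤ ∫⁻ x in C, h₂ x ∂μhat :=
    (ENNReal.add_le_add_iff_right (measure_ne_top lam _)).mp h1
  exact le_antisymm h2 hA

/-- Upgrade a `Gneg`-simple function to a simple function for the full σ-algebra. -/
def toFull {q : ℕ} (ψ : @SimpleFunc (ℤ → Fin q) (Gneg q) ℝ≥0∞) :
    SimpleFunc (ℤ → Fin q) ℝ≥0∞ :=
  ⟨@SimpleFunc.toFun (ℤ → Fin q) (Gneg q) ℝ≥0∞ ψ,
    fun x => Gneg_le q _ (@SimpleFunc.measurableSet_fiber _ _ (Gneg q) ψ x),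
    @SimpleFunc.finite_range _ _ (Gneg q) ψ⟩

lemma toFull_coe {q : ℕ} (ψ : @SimpleFunc (ℤ → Fin q) (Gneg q) ℝ≥0∞) (x : ℤ → Fin q) :
    ψ x = (toFull ψ) x := by rfl

/-- Integrals of a `Gneg`-measurable function split off future events on each cylinder. -/
lemma key_split {q : ℕ} (μhat : Measure (ℤ → Fin q))
    (hsplit : ∀ (i : Fin q) (S T : Set (ℤ → Fin q)), MeasurableSet S → MeasurableSet T →
      (∀ x y : ℤ → Fin q, (∀ n : ℤ, n < 0 → x n = y n) → (x ∈ S ↔ y ∈ S)) →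
      (∀ x y : ℤ → Fin q, (∀ n : ℤ, 0 < n → x n = y n) → (x ∈ T ↔ y ∈ T)) →
      μhat (S ∩ T ∩ {x | x 0 = i}) * μhat {x | x 0 = i}
        = μhat (S ∩ {x | x 0 = i}) * μhat (T ∩ {x | x 0 = i}))
    (h : (ℤ → Fin q) → ℝ≥0∞) (hh : Measurable[Gneg q] h)
    (T : Set (ℤ → Fin q)) (hT : MeasurableSet T)
    (hTpos : ∀ x y : ℤ → Fin q, (∀ n : ℤ, 0 < n → x n = y n) → (x ∈ T ↔ y ∈ T))
    (i : Fin q) :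
    (∫⁻ x in T ∩ {x | x 0 = i}, h x ∂μhat) * μhat {x | x 0 = i}
      = μhat (T ∩ {x | x 0 = i}) * ∫⁻ x in {x | x 0 = i}, h x ∂μhat := by
  have hle : Gneg q ≤ (inferInstance : MeasurableSpace (ℤ → Fin q)) := Gneg_le q
  -- the claim for `Gneg`-simple functions
  have hIi : MeasurableSet {x : ℤ → Fin q | x 0 = i} :=
    measurableSet_coord (α := fun _ : ℤ => Fin q) (0 : ℤ) i
  have hsimple : ∀ s : @SimpleFunc (ℤ → Fin q) (Gneg q) ℝ≥0∞,
      (∫⁻ x in T ∩ {x | x 0 = i}, s x ∂μhat) * μhat {x | x 0 = i}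
        = μhat (T ∩ {x | x 0 = i}) * ∫⁻ x in {x | x 0 = i}, s x ∂μhat := by
    intro s
    have hint : ∀ W : Set (ℤ → Fin q), MeasurableSet W →
        ∫⁻ x in W, s x ∂μhat
          = ∑ y ∈ (toFull s).range, y * μhat ((toFull s) ⁻¹' {y} ∩ W) := by
      intro W hW
      simp only [toFull_coe s]
      rw [SimpleFunc.lintegral_eq_lintegral (toFull s) (μhat.restrict W)]
      unfold SimpleFunc.lintegral
      refine Finset.sum_congr rfl fun y _ => ?_
      rw [Measure.restrict_apply ((toFull s).measurableSet_fiber y)]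
    rw [hint _ (hT.inter hIi), hint _ hIi, Finset.sum_mul, Finset.mul_sum]
    refine Finset.sum_congr rfl fun y _ => ?_
    have hfibG : MeasurableSet[Gneg q] ((toFull s) ⁻¹' {y}) := by
      exact @SimpleFunc.measurableSet_fiber _ _ (Gneg q) s y
    have hfib : MeasurableSet ((toFull s) ⁻¹' {y}) := Gneg_le q _ hfibG
    have hkey := hsplit i ((toFull s) ⁻¹' {y}) T hfib hT (negdep_of_Gneg hfibG) hTpos
    calc y * μhat ((toFull s) ⁻¹' {y} ∩ (T ∩ {x | x 0 = i})) * μhat {x | x 0 = i}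
        = y * (μhat ((toFull s) ⁻¹' {y} ∩ T ∩ {x | x 0 = i}) * μhat {x | x 0 = i}) := by
          rw [Set.inter_assoc]; ring
      _ = y * (μhat ((toFull s) ⁻¹' {y} ∩ {x | x 0 = i}) * μhat (T ∩ {x | x 0 = i})) := by
          rw [hkey]
      _ = μhat (T ∩ {x | x 0 = i}) * (y * μhat ((toFull s) ⁻¹' {y} ∩ {x | x 0 = i})) := by
          ring
  -- approximate `h` by simple functions
  have hmono : Monotone fun n => ((@SimpleFunc.eapprox (ℤ → Fin q) (Gneg q) h n) :
      (ℤ → Fin q) → ℝ≥0∞) := by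
    have hm : Monotone (@SimpleFunc.eapprox (ℤ → Fin q) (Gneg q) h) :=
      @SimpleFunc.monotone_eapprox _ (Gneg q) h
    exact fun a b hab x => hm hab x
  have hmeas : ∀ n, Measurable ((@SimpleFunc.eapprox (ℤ → Fin q) (Gneg q) h n) :
      (ℤ → Fin q) → ℝ≥0∞) := fun n =>
    (@SimpleFunc.measurable (ℤ → Fin q) ℝ≥0∞ (Gneg q) _
      (@SimpleFunc.eapprox (ℤ → Fin q) (Gneg q) h n)).mono hle le_rfl
  have happ : ∀ W : Set (ℤ → Fin q), ∫⁻ x in W, h x ∂μhat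
      = ⨆ n, ∫⁻ x in W, (@SimpleFunc.eapprox (ℤ → Fin q) (Gneg q) h n) x ∂μhat := by
    intro W
    rw [← lintegral_iSup hmeas hmono]
    refine lintegral_congr fun x => ?_
    exact (@SimpleFunc.iSup_eapprox_apply (ℤ → Fin q) (Gneg q) h hh x).symm
  rw [happ, happ, ENNReal.iSup_mul, ENNReal.mul_iSup]
  exact iSup_congr fun n => hsimple _

set_option maxHeartbeats 1000000 in
set_option synthInstance.maxHeartbeats 400000 in
/-- **Projection of an adapted invariant measure is a skew-product.** Let `μ̂` be the two-sided
Markov measure on `M̂ = X^ℤ`, whose restriction to each cylinder `{x̂ | x̂ 0 = i}` is a product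
of measures on past and future coordinates (stated here as conditional independence of events
depending only on negative, resp. positive, coordinates). Suppose `m̂` is a probability measure
on `M̂ × P(ℝ²)`, invariant under the projective cocycle `P(F̂)(x̂, v) = (f̂ x̂, A(x̂ 0) v)`,
projecting to `μ̂`, and admitting a disintegration `m̂(C × D) = ∫_C ν_x̂(D) dμ̂` whose
conditional measures `ν_x̂` depend only on the negative coordinates of `x̂`. Then the projection
`m` of `m̂` to `M × P(ℝ²)` (forgetting negative coordinates) is a skew-product:
`m = ∑ i, (μ | [0;i]) × η_i` for some measure vector `η`. -/
theorem projection_is_skew_product {q : ℕ} (hq : 0 < q)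
    (P : Fin q → Fin q → ℝ) (p : Fin q → ℝ)
    (hnonneg : ∀ i j, 0 ≤ P i j) (hstoch : ∀ i, ∑ j, P i j = 1)
    (haper : ∃ N : ℕ, 1 ≤ N ∧ ∀ i j, 0 < (Matrix.of P ^ N) i j)
    (hppos : ∀ i, 0 < p i) (hpsum : ∑ i, p i = 1)
    (hpstat : ∀ j, ∑ s, p s * P s j = p j)
    (A : Fin q → (Fin 2 → ℝ) ≃ₗ[ℝ] (Fin 2 → ℝ))
    (μhat : Measure (ℤ → Fin q)) [IsProbabilityMeasure μhat]
    -- `μ̂` is the two-sided Markov measure: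
    (hμhat : ∀ (m : ℤ) (n : ℕ) (w : Fin (n + 1) → Fin q),
      μhat {x | ∀ s : Fin (n + 1), x (m + (s : ℕ)) = w s}
        = ENNReal.ofReal (p (w 0) * ∏ s : Fin n, P (w s.castSucc) (w s.succ)))
    -- product structure on each cylinder `[0;i]`: past and future are independent given `x 0 = i`
    (hsplit : ∀ (i : Fin q) (S T : Set (ℤ → Fin q)), MeasurableSet S → MeasurableSet T →
      (∀ x y : ℤ → Fin q, (∀ n : ℤ, n < 0 → x n = y n) → (x ∈ S ↔ y ∈ S)) →
      (∀ x y : ℤ → Fin q, (∀ n : ℤ, 0 < n → x n = y n) → (x ∈ T ↔ y ∈ T)) →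
      μhat (S ∩ T ∩ {x | x 0 = i}) * μhat {x | x 0 = i}
        = μhat (S ∩ {x | x 0 = i}) * μhat (T ∩ {x | x 0 = i}))
    (mhat : Measure ((ℤ → Fin q) × Pd 2)) [IsProbabilityMeasure mhat]
    (hproj : mhat.map Prod.fst = μhat)
    -- invariance under the projective cocycle over the two-sided shift
    (hinv : mhat.map (fun z : (ℤ → Fin q) × Pd 2 =>
        ((fun n => z.1 (n + 1)), act 2 (A (z.1 0)) z.2)) = mhat)
    -- disintegration with conditionals depending only on the negative coordinates
    (ν : (ℤ → Fin q) → Measure (Pd 2)) (hνprob : ∀ x, IsProbabilityMeasure (ν x))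
    (hdis : ∀ (C : Set (ℤ → Fin q)) (D : Set (Pd 2)), MeasurableSet C → MeasurableSet D →
      mhat (C ×ˢ D) = ∫⁻ x in C, ν x D ∂μhat)
    (hνneg : ∀ x y : ℤ → Fin q, (∀ n : ℤ, n < 0 → x n = y n) → ν x = ν y) :
    ∃ η : Fin q → Measure (Pd 2),
      mhat.map (fun z : (ℤ → Fin q) × Pd 2 => ((fun n : ℕ => z.1 (n : ℤ)), z.2))
        = ∑ i, ((μhat.map (fun (x : ℤ → Fin q) (n : ℕ) => x (n : ℤ))).restrict
            {x : ℕ → Fin q | x 0 = i}).prod (η i) := by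
  classical
  -- notation
  set π : (ℤ → Fin q) → (ℕ → Fin q) := fun x n => x (n : ℤ) with hπdef
  have hπ : Measurable π := measurable_pi_lambda _ fun n => measurable_pi_apply _
  have h0meas : ∀ i : Fin q, MeasurableSet {x : ℤ → Fin q | x 0 = i} := fun i =>
    measurableSet_coord (α := fun _ : ℤ => Fin q) (0 : ℤ) i
  -- the measure of the cylinder `[0;i]`
  have hci : ∀ i : Fin q, μhat {x : ℤ → Fin q | x 0 = i} = ENNReal.ofReal (p i) := by
    intro i
    have h := hμhat 0 0 (fun _ => i)
    have hset : {x : ℤ → Fin q | ∀ s : Fin 1, x (0 + (s : ℕ)) = (fun _ => i) s}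
        = {x : ℤ → Fin q | x 0 = i} := by
      ext x
      constructor
      · intro hx
        have := hx 0
        simpa using this
      · intro hx s
        have hs0 : (s : ℕ) = 0 := by have := s.isLt; omega
        rw [hs0]
        simpa using hx
    rw [hset] at h
    rw [h]
    simp
  have hci0 : ∀ i : Fin q, μhat {x : ℤ → Fin q | x 0 = i} ≠ 0 := by
    intro i; rw [hci i]
    simp only [ne_eq, ENNReal.ofReal_eq_zero, not_le]
    exact hppos i
  have hcitop : ∀ i : Fin q, μhat {x : ℤ → Fin q | x 0 = i} ≠ ⊤ := fun i => measure_ne_top _ _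
  -- the skew factor measures
  refine ⟨fun i => (μhat {x : ℤ → Fin q | x 0 = i})⁻¹ •
    ((mhat.restrict ({x : ℤ → Fin q | x 0 = i} ×ˢ (Set.univ : Set (Pd 2)))).map Prod.snd), ?_⟩
  set η : Fin q → Measure (Pd 2) := fun i => (μhat {x : ℤ → Fin q | x 0 = i})⁻¹ •
    ((mhat.restrict ({x : ℤ → Fin q | x 0 = i} ×ˢ (Set.univ : Set (Pd 2)))).map Prod.snd)
    with hηdef
  have hη : ∀ (i : Fin q) (D : Set (Pd 2)), MeasurableSet D →
      η i D = (μhat {x : ℤ → Fin q | x 0 = i})⁻¹ * mhat ({x : ℤ → Fin q | x 0 = i} ×ˢ D) := by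
    intro i D hD
    rw [hηdef]
    simp only [Measure.smul_apply, smul_eq_mul]
    rw [Measure.map_apply measurable_snd hD,
      Measure.restrict_apply (measurable_snd hD)]
    have hseteq : Prod.snd ⁻¹' D ∩ ({x : ℤ → Fin q | x 0 = i} ×ˢ (Set.univ : Set (Pd 2)))
        = {x : ℤ → Fin q | x 0 = i} ×ˢ D := by
      ext z
      simp only [Set.mem_inter_iff, Set.mem_preimage, Set.mem_prod, Set.mem_univ, and_true,
        Set.mem_setOf_eq]
      exact and_comm
    rw [hseteq]
  have hηfin : ∀ i, IsFiniteMeasure (η i) := by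
    intro i
    constructor
    rw [hη i Set.univ MeasurableSet.univ]
    refine ENNReal.mul_lt_top ?_ (measure_lt_top _ _)
    exact ENNReal.inv_lt_top.mpr (pos_iff_ne_zero.mpr (hci0 i))
  -- measurability of the projection
  set Φ : (ℤ → Fin q) × Pd 2 → (ℕ → Fin q) × Pd 2 :=
    fun z => (π z.1, z.2) with hΦdef
  have hΦ : Measurable Φ := (hπ.comp measurable_fst).prodMk measurable_snd
  haveI : IsProbabilityMeasure (mhat.map Φ) := Measure.isProbabilityMeasure_map hΦ.aemeasurable
  haveI : IsProbabilityMeasure (μhat.map π) := Measure.isProbabilityMeasure_map hπ.aemeasurable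
  -- the rectangle computation
  have hrect : ∀ (C : Set (ℕ → Fin q)) (D : Set (Pd 2)), MeasurableSet C → MeasurableSet D →
      (mhat.map Φ) (C ×ˢ D) = (∑ i, ((μhat.map π).restrict
        {x : ℕ → Fin q | x 0 = i}).prod (η i)) (C ×ˢ D) := by
    intro C D hC hD
    -- density for the slice measure of `D`
    set lam : Measure (ℤ → Fin q) :=
      (mhat.restrict ((Set.univ : Set (ℤ → Fin q)) ×ˢ D)).map Prod.fst with hlamdef
    have hlam : ∀ C' : Set (ℤ → Fin q), MeasurableSet C' → lam C' = mhat (C' ×ˢ D) := by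
      intro C' hC'
      rw [hlamdef, Measure.map_apply measurable_fst hC',
        Measure.restrict_apply (measurable_fst hC')]
      have hseteq : Prod.fst ⁻¹' C' ∩ ((Set.univ : Set (ℤ → Fin q)) ×ˢ D) = C' ×ˢ D := by
        ext z
        simp only [Set.mem_inter_iff, Set.mem_preimage, Set.mem_prod, Set.mem_univ, true_and,
          Set.mem_setOf_eq]
      rw [hseteq]
    have hlamint : ∀ C' : Set (ℤ → Fin q), MeasurableSet C' →
        lam C' = ∫⁻ x in C', ν x D ∂μhat := by
      intro C' hC'
      rw [hlam C' hC', hdis C' D hC' hD]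
    obtain ⟨h, hhG, hh⟩ := exists_adapted_density μhat lam (fun x => ν x D)
      (fun x => prob_le_one)
      (fun x y hxy => by show ν x D = ν y D; rw [hνneg x y hxy]) hlamint
    have hmhatD : ∀ C' : Set (ℤ → Fin q), MeasurableSet C' →
        mhat (C' ×ˢ D) = ∫⁻ x in C', h x ∂μhat := by
      intro C' hC'
      rw [← hlam C' hC', hh C' hC']
    -- LHS
    have hΦpre : Φ ⁻¹' (C ×ˢ D) = (π ⁻¹' C) ×ˢ D := rfl
    rw [Measure.map_apply hΦ (hC.prod hD), hΦpre]
    rw [hmhatD _ (hπ hC)]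
    -- partition over the value at 0
    have hcup : π ⁻¹' C = ⋃ i : Fin q, (π ⁻¹' C ∩ {x : ℤ → Fin q | x 0 = i}) := by
      ext x
      simp only [Set.mem_iUnion, Set.mem_inter_iff, Set.mem_setOf_eq]
      constructor
      · intro hx; exact ⟨x 0, hx, rfl⟩
      · rintro ⟨i, hx, -⟩; exact hx
    have hdisj : Pairwise (Function.onFun Disjoint
        fun i : Fin q => (π ⁻¹' C ∩ {x : ℤ → Fin q | x 0 = i})) := by
      intro i j hij
      simp only [Function.onFun]
      rw [Set.disjoint_left]
      rintro x ⟨-, hxi⟩ ⟨-, hxj⟩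
      exact hij (hxi.symm.trans hxj)
    have hmeasi : ∀ i : Fin q, MeasurableSet (π ⁻¹' C ∩ {x : ℤ → Fin q | x 0 = i}) :=
      fun i => (hπ hC).inter (h0meas i)
    rw [hcup, lintegral_iUnion hmeasi hdisj, tsum_fintype]
    -- RHS
    rw [Measure.finset_sum_apply]
    refine Finset.sum_congr rfl fun i _ => ?_
    haveI := hηfin i
    rw [Measure.prod_prod, Measure.restrict_apply hC]
    -- identify the `ℕ`-side measure with `μhat` of the corresponding cylinder
    have hpreC : π ⁻¹' (C ∩ {x : ℕ → Fin q | x 0 = i})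
        = π ⁻¹' C ∩ {x : ℤ → Fin q | x 0 = i} := by
      ext x
      simp only [Set.mem_preimage, Set.mem_inter_iff, Set.mem_setOf_eq]
      constructor
      · rintro ⟨h1, h2⟩
        refine ⟨h1, ?_⟩
        simpa [hπdef] using h2
      · rintro ⟨h1, h2⟩
        refine ⟨h1, ?_⟩
        simpa [hπdef] using h2
    have hNmeas : MeasurableSet {x : ℕ → Fin q | x 0 = i} :=
      measurableSet_coord (α := fun _ : ℕ => Fin q) (0 : ℕ) i
    rw [Measure.map_apply hπ (hC.inter hNmeas), hpreC]
    -- build the future-dependent set T with T ∩ [0;i] = π ⁻¹' C ∩ [0;i]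
    set σi : (ℤ → Fin q) → (ℕ → Fin q) :=
      fun x n => if n = 0 then i else x (n : ℤ) with hσdef
    have hσmeas : Measurable σi := by
      refine measurable_pi_lambda _ fun n => ?_
      by_cases hn : n = 0
      · simp [hσdef, hn]
      · simp only [hσdef, hn, if_false]
        exact measurable_pi_apply _
    set T : Set (ℤ → Fin q) := σi ⁻¹' C with hTdef
    have hT : MeasurableSet T := hσmeas hC
    have hTpos : ∀ x y : ℤ → Fin q, (∀ n : ℤ, 0 < n → x n = y n) → (x ∈ T ↔ y ∈ T) := by
      intro x y hxy
      have : σi x = σi y := by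
        funext n
        by_cases hn : n = 0
        · simp [hσdef, hn]
        · simp only [hσdef, hn, if_false]
          refine hxy _ ?_
          omega
      rw [hTdef, Set.mem_preimage, Set.mem_preimage, this]
    have hTi : T ∩ {x : ℤ → Fin q | x 0 = i} = π ⁻¹' C ∩ {x : ℤ → Fin q | x 0 = i} := by
      ext x
      simp only [hTdef, Set.mem_inter_iff, Set.mem_preimage, Set.mem_setOf_eq]
      constructor
      · rintro ⟨h1, h2⟩
        refine ⟨?_, h2⟩
        have : σi x = π x := by
          funext n
          by_cases hn : n = 0
          · simp [hσdef, hπdef, hn, h2]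
          · simp [hσdef, hπdef, hn]
        rwa [this] at h1
      · rintro ⟨h1, h2⟩
        refine ⟨?_, h2⟩
        have : σi x = π x := by
          funext n
          by_cases hn : n = 0
          · simp [hσdef, hπdef, hn, h2]
          · simp [hσdef, hπdef, hn]
        rwa [this]
    -- apply the key splitting lemma
    have hkey := key_split μhat hsplit h hhG T hT hTpos i
    rw [hTi] at hkey
    -- conclude
    have hWmeas : MeasurableSet (π ⁻¹' C ∩ {x : ℤ → Fin q | x 0 = i}) := hmeasi i
    have hma : ∫⁻ x in π ⁻¹' C ∩ {x : ℤ → Fin q | x 0 = i}, h x ∂μhat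
        = μhat (π ⁻¹' C ∩ {x : ℤ → Fin q | x 0 = i})
          * ((μhat {x : ℤ → Fin q | x 0 = i})⁻¹ * ∫⁻ x in {x : ℤ → Fin q | x 0 = i}, h x ∂μhat) := by
      have h1 : (∫⁻ x in π ⁻¹' C ∩ {x : ℤ → Fin q | x 0 = i}, h x ∂μhat)
          * μhat {x : ℤ → Fin q | x 0 = i} * (μhat {x : ℤ → Fin q | x 0 = i})⁻¹
          = ∫⁻ x in π ⁻¹' C ∩ {x : ℤ → Fin q | x 0 = i}, h x ∂μhat := by
        rw [mul_assoc, ENNReal.mul_inv_cancel (hci0 i) (hcitop i), mul_one]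
      rw [← h1, hkey]
      ring
    rw [hma, hη i D hD, hmhatD _ (h0meas i)]
  -- finish by the π-system argument for product measurable rectangles
  refine MeasureTheory.ext_of_generate_finite _ generateFrom_prod.symm isPiSystem_prod ?_ ?_
  · rintro s ⟨C, hC, D, hD, rfl⟩
    exact hrect C D hC hD
  · have := hrect Set.univ Set.univ MeasurableSet.univ MeasurableSet.univ
    rwa [Set.univ_prod_univ] at this

end PaperNS
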